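/- Let n = 1 and let V : ℝ → ℝ be continuous and even, with V^ave(z) = (1/2π)∫₀^{2π} V(|z| cos θ) dθ. Then the map V ↦ V^ave is injective: if V₁, V₂ are two even continuous functions with V₁^ave = V₂^ave on ℂ, then V₁ = V₂. -/

import Mathlib

open scoped Real

/-- The harmonic-oscillator average of `V : ℝ → ℝ` in the complex phase-space
coordinate `z = x + ip`. -/
noncomputable def ave1 (V : ℝ → ℝ) (z : ℂ) : ℝ :=
  (1 / (2 * Real.pi)) *
    ∫ t in (0:ℝ)..(2 * Real.pi), V ((Complex.exp (Complex.I * t) * z).re)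

open Real intervalIntegral

noncomputable def Wc (n : ℕ) : ℝ := ∫ θ in (0:ℝ)..(π/2), Real.cos θ ^ n

lemma Wc_zero : Wc 0 = π / 2 := by simp [Wc]

lemma Wc_one : Wc 1 = 1 := by simp [Wc]

lemma Wc_rec (n : ℕ) : Wc (n + 2) = (n + 1) / (n + 2) * Wc n := by
  unfold Wc
  rw [integral_cos_pow]
  simp

lemma Wc_prod (n : ℕ) : Wc n * Wc (n + 1) = π / (2 * (n + 1)) := by
  induction n with
  | zero => simp [Wc_zero, Wc_one]
  | succ k ih =>
      have : Wc (k + 1) * Wc (k + 2) = (k + 1) / (k + 2) * (Wc k * Wc (k + 1)) := by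
        rw [Wc_rec k]; ring
      rw [this, ih]
      push_cast
      have h2 : (k : ℝ) + 2 ≠ 0 := by positivity
      have h1 : (k : ℝ) + 1 ≠ 0 := by positivity
      field_simp
      ring

noncomputable def Qint (f : ℝ → ℝ) (x : ℝ) : ℝ := ∫ θ in (0:ℝ)..(π/2), f (x * Real.cos θ)

lemma Qint_continuous {f : ℝ → ℝ} (hf : Continuous f) : Continuous (Qint f) := by
  rw [continuous_iff_continuousAt]
  intro x₀
  obtain ⟨C, hC⟩ := (isCompact_Icc (a := -(|x₀|+1)) (b := |x₀|+1)).exists_bound_of_continuousOn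
    hf.continuousOn
  apply intervalIntegral.continuousAt_of_dominated_interval
    (bound := fun _ => C) (F := fun x θ => f (x * Real.cos θ))
  · filter_upwards with x
    exact ((hf.comp (continuous_const.mul Real.continuous_cos)).aestronglyMeasurable).restrict
  · have hball : Metric.ball x₀ 1 ∈ nhds x₀ := Metric.ball_mem_nhds x₀ one_pos
    filter_upwards [hball] with x hx
    filter_upwards with θ _
    have hxle : |x| ≤ |x₀| + 1 := by
      have := abs_sub_abs_le_abs_sub x x₀
      have h2 : |x - x₀| < 1 := by simpa [Real.dist_eq] using hx
      linarith
    have harg : x * Real.cos θ ∈ Set.Icc (-(|x₀|+1)) (|x₀|+1) := by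
      have : |x * Real.cos θ| ≤ |x₀| + 1 := by
        rw [abs_mul]
        calc |x| * |Real.cos θ| ≤ (|x₀| + 1) * 1 :=
              mul_le_mul hxle (Real.abs_cos_le_one θ) (abs_nonneg _) (by positivity)
          _ = |x₀| + 1 := mul_one _
      exact abs_le.mp this |>.imp (fun h =>h) (fun h => h) |> fun ⟨a,b⟩ => ⟨a, b⟩
    simpa [Real.norm_eq_abs] using hC _ harg
  · exact intervalIntegrable_const
  · filter_upwards with θ _
    exact (hf.comp (continuous_id.mul continuous_const)).continuousAt

lemma Qint_bound {g : ℝ → ℝ} {R ε x : ℝ} (hx : |x| ≤ R)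
    (hb : ∀ y ∈ Set.Icc (-R) R, |g y| ≤ ε)
    : |Qint g x| ≤ ε * (π / 2) := by
  have h : ∀ θ ∈ Set.uIoc (0:ℝ) (π/2), ‖g (x * Real.cos θ)‖ ≤ ε := by
    intro θ _
    apply hb
    have : |x * Real.cos θ| ≤ R := by
      rw [abs_mul]
      calc |x| * |Real.cos θ| ≤ R * 1 :=
        mul_le_mul hx (Real.abs_cos_le_one θ) (abs_nonneg _) ((abs_nonneg x).trans hx)
        _ = R := mul_one R
    exact abs_le.mp this
  have := intervalIntegral.norm_integral_le_of_norm_le_const h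
  have hπ : |π/2 - 0| = π/2 := by
    rw [sub_zero, abs_of_pos]; positivity
  rw [hπ] at this
  simpa [Qint, Real.norm_eq_abs] using this

lemma Qint_monomial (n : ℕ) (a x : ℝ) :
    Qint (fun u => a * u ^ n) x = a * x ^ n * Wc n := by
  unfold Qint Wc
  simp_rw [mul_pow, ← mul_assoc]
  rw [intervalIntegral.integral_const_mul]

lemma key_monomial (n : ℕ) (a s : ℝ) (hW : Wc n * Wc (n+1) = π / (2*(n+1))) :
    s * ∫ φ in (0:ℝ)..(π/2), Real.cos φ * Qint (fun u => a * u ^ n) (s * Real.cos φ)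
      = (π/2) * ∫ u in (0:ℝ)..s, a * u ^ n := by
  have h1 : ∀ φ : ℝ, Real.cos φ * Qint (fun u => a * u ^ n) (s * Real.cos φ)
      = (a * s ^ n * Wc n) * Real.cos φ ^ (n+1) := by
    intro φ
    rw [Qint_monomial]
    ring
  simp_rw [h1]
  rw [intervalIntegral.integral_const_mul]
  rw [intervalIntegral.integral_const_mul, integral_pow]
  show s * (a * s ^ n * Wc n * Wc (n+1)) = π / 2 * (a * ((s ^ (n+1) - 0 ^ (n+1)) / (n+1)))
  have h2 : s * (a * s ^ n * Wc n * Wc (n + 1)) = s * a * s^n * (Wc n * Wc (n+1)) := by ring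
  rw [h2, hW]
  have : ((n:ℝ) + 1) ≠ 0 := by positivity
  field_simp
  ring

lemma key_poly (p : Polynomial ℝ) (s : ℝ) :
    s * ∫ φ in (0:ℝ)..(π/2), Real.cos φ * Qint (fun u => p.eval u) (s * Real.cos φ)
      = (π/2) * ∫ u in (0:ℝ)..s, p.eval u := by
  induction p using Polynomial.induction_on' with
  | monomial n a =>
      simp_rw [Polynomial.eval_monomial]
      exact key_monomial n a s (Wc_prod n)
  | add p q hp hq =>
      have hQadd : ∀ x : ℝ, Qint (fun u => (p + q).eval u) x
          = Qint (fun u => p.eval u) x + Qint (fun u => q.eval u) x := by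
        intro x
        unfold Qint
        simp_rw [Polynomial.eval_add]
        exact intervalIntegral.integral_add
          ((p.continuous.comp (continuous_const.mul Real.continuous_cos)).intervalIntegrable _ _)
          ((q.continuous.comp (continuous_const.mul Real.continuous_cos)).intervalIntegrable _ _)
      have hip : IntervalIntegrable
          (fun φ => Real.cos φ * Qint (fun u => p.eval u) (s * Real.cos φ)) MeasureTheory.volume 0 (π/2) :=
        (Real.continuous_cos.mul ((Qint_continuous p.continuous).comp
          (continuous_const.mul Real.continuous_cos))).intervalIntegrable _ _
      have hiq : IntervalIntegrable
          (fun φ => Real.cos φ * Qint (fun u => q.eval u) (s * Real.cos φ)) MeasureTheory.volume 0 (π/2) :=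
        (Real.continuous_cos.mul ((Qint_continuous q.continuous).comp
          (continuous_const.mul Real.continuous_cos))).intervalIntegrable _ _
      have h1 : (∫ φ in (0:ℝ)..(π/2), Real.cos φ * Qint (fun u => (p+q).eval u) (s * Real.cos φ))
          = (∫ φ in (0:ℝ)..(π/2), Real.cos φ * Qint (fun u => p.eval u) (s * Real.cos φ))
            + ∫ φ in (0:ℝ)..(π/2), Real.cos φ * Qint (fun u => q.eval u) (s * Real.cos φ) := by
        rw [← intervalIntegral.integral_add hip hiq]
        congr 1
        funext φ
        rw [hQadd]
        ring
      have h2 : (∫ u in (0:ℝ)..s, (p+q).eval u)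
          = (∫ u in (0:ℝ)..s, p.eval u) + ∫ u in (0:ℝ)..s, q.eval u := by
        simp_rw [Polynomial.eval_add]
        exact intervalIntegral.integral_add (p.continuous.intervalIntegrable _ _)
          (q.continuous.intervalIntegrable _ _)
      rw [h1, h2]
      rw [mul_add, mul_add, hp, hq]

lemma key_identity {f : ℝ → ℝ} (hf : Continuous f) (s : ℝ) :
    s * ∫ φ in (0:ℝ)..(π/2), Real.cos φ * Qint f (s * Real.cos φ)
      = (π/2) * ∫ u in (0:ℝ)..s, f u := by
  set L : ℝ := s * ∫ φ in (0:ℝ)..(π/2), Real.cos φ * Qint f (s * Real.cos φ) with hL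
  set R : ℝ := (π/2) * ∫ u in (0:ℝ)..s, f u with hR
  by_contra hne
  have hd : 0 < |L - R| := by
    rw [abs_pos, sub_ne_zero]; exact hne
  set K : ℝ := |s| * (π/2)^2 + (π/2) * |s| + 1 with hK
  have hKpos : 0 < K := by positivity
  set ε : ℝ := |L - R| / (2 * K) with hε
  have hεpos : 0 < ε := by positivity
  -- Weierstrass
  obtain ⟨p, hp⟩ := exists_polynomial_near_of_continuousOn (-|s|) |s| f hf.continuousOn ε hεpos
  -- difference function
  set g : ℝ → ℝ := fun u => p.eval u - f u with hg
  have hgc : Continuous g := p.continuous.sub hf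
  have hgb : ∀ y ∈ Set.Icc (-|s|) |s|, |g y| ≤ ε := fun y hy => (hp y hy).le
  -- difference of Qint's
  have hQsub : ∀ x : ℝ, Qint g x = Qint (fun u => p.eval u) x - Qint f x := by
    intro x
    unfold Qint
    exact intervalIntegral.integral_sub
      ((p.continuous.comp (continuous_const.mul Real.continuous_cos)).intervalIntegrable _ _)
      ((hf.comp (continuous_const.mul Real.continuous_cos)).intervalIntegrable _ _)
  have hip : IntervalIntegrable
      (fun φ => Real.cos φ * Qint (fun u => p.eval u) (s * Real.cos φ)) MeasureTheory.volume 0 (π/2) :=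
    (Real.continuous_cos.mul ((Qint_continuous p.continuous).comp
      (continuous_const.mul Real.continuous_cos))).intervalIntegrable _ _
  have hif : IntervalIntegrable
      (fun φ => Real.cos φ * Qint f (s * Real.cos φ)) MeasureTheory.volume 0 (π/2) :=
    (Real.continuous_cos.mul ((Qint_continuous hf).comp
      (continuous_const.mul Real.continuous_cos))).intervalIntegrable _ _
  -- bound |Lp - L|
  have hLp : s * ∫ φ in (0:ℝ)..(π/2), Real.cos φ * Qint (fun u => p.eval u) (s * Real.cos φ)
      = (π/2) * ∫ u in (0:ℝ)..s, p.eval u := key_poly p s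
  have hlb : |s * (∫ φ in (0:ℝ)..(π/2), Real.cos φ * Qint (fun u => p.eval u) (s * Real.cos φ)) - L|
      ≤ |s| * ((ε * (π/2)) * (π/2)) := by
    rw [hL, ← mul_sub, abs_mul]
    apply mul_le_mul_of_nonneg_left _ (abs_nonneg s)
    rw [← intervalIntegral.integral_sub hip hif]
    have hbnd : ∀ φ ∈ Set.uIoc (0:ℝ) (π/2),
        ‖Real.cos φ * Qint (fun u => p.eval u) (s * Real.cos φ)
          - Real.cos φ * Qint f (s * Real.cos φ)‖ ≤ ε * (π/2) := by
      intro φ _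
      have : Real.cos φ * Qint (fun u => p.eval u) (s * Real.cos φ)
          - Real.cos φ * Qint f (s * Real.cos φ) = Real.cos φ * Qint g (s * Real.cos φ) := by
        rw [hQsub]; ring
      rw [this, Real.norm_eq_abs, abs_mul]
      calc |Real.cos φ| * |Qint g (s * Real.cos φ)| ≤ 1 * (ε * (π/2)) := by
            apply mul_le_mul (Real.abs_cos_le_one φ) _ (abs_nonneg _) zero_le_one
            apply Qint_bound _ hgb
            rw [abs_mul]
            calc |s| * |Real.cos φ| ≤ |s| * 1 :=
                  mul_le_mul_of_nonneg_left (Real.abs_cos_le_one φ) (abs_nonneg s)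
              _ = |s| := mul_one _
        _ = ε * (π/2) := one_mul _
    have := intervalIntegral.norm_integral_le_of_norm_le_const hbnd
    have hπ : |π/2 - 0| = π/2 := by rw [sub_zero, abs_of_pos]; positivity
    rw [hπ] at this
    simpa [Real.norm_eq_abs] using this
  -- bound |Rp - R|
  have hrb : |(π/2) * (∫ u in (0:ℝ)..s, p.eval u) - R| ≤ (π/2) * (ε * |s|) := by
    rw [hR, ← mul_sub, abs_mul, abs_of_pos (by positivity : (0:ℝ) < π/2)]
    apply mul_le_mul_of_nonneg_left _ (by positivity : (0:ℝ) ≤ π/2)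
    rw [← intervalIntegral.integral_sub (p.continuous.intervalIntegrable _ _)
      (hf.intervalIntegrable _ _)]
    have hbnd : ∀ u ∈ Set.uIoc (0:ℝ) s, ‖p.eval u - f u‖ ≤ ε := by
      intro u hu
      apply hgb
      rw [Set.uIoc] at hu
      constructor
      · exact (le_min (neg_nonpos.mpr (abs_nonneg s)) (neg_abs_le s)).trans hu.1.le
      · exact hu.2.trans (max_le (abs_nonneg s) (le_abs_self s))
    have := intervalIntegral.norm_integral_le_of_norm_le_const hbnd
    rw [sub_zero] at this
    simpa [Real.norm_eq_abs, mul_comm] using this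
  -- combine
  have : |L - R| ≤ |s| * ((ε * (π/2)) * (π/2)) + (π/2) * (ε * |s|) := by
    calc |L - R| = |(L - (π/2) * (∫ u in (0:ℝ)..s, p.eval u))
          + ((π/2) * (∫ u in (0:ℝ)..s, p.eval u) - R)| := by ring_nf
      _ ≤ |L - (π/2) * (∫ u in (0:ℝ)..s, p.eval u)|
          + |(π/2) * (∫ u in (0:ℝ)..s, p.eval u) - R| := abs_add_le _ _
      _ ≤ |s| * ((ε * (π/2)) * (π/2)) + (π/2) * (ε * |s|) := by
          apply add_le_add _ hrb
          rw [← hLp, abs_sub_comm]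
          exact hlb
  have hfin : |L - R| ≤ ε * K := by
    calc |L - R| ≤ |s| * ((ε * (π/2)) * (π/2)) + (π/2) * (ε * |s|) := this
      _ = ε * (|s| * (π/2)^2 + (π/2) * |s|) := by ring
      _ ≤ ε * K := by
          apply mul_le_mul_of_nonneg_left _ hεpos.le
          rw [hK]; linarith
  rw [hε] at hfin
  have : |L - R| ≤ |L - R| / 2 := by
    calc |L - R| ≤ |L - R| / (2 * K) * K := hfin
      _ = |L - R| / 2 := by field_simp
  linarith

lemma quarter_of_full {V : ℝ → ℝ} (hV : Continuous V) (he : ∀ x, V (-x) = V x) (r : ℝ)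
    (hg : (∫ t in (0:ℝ)..(2*π), V (r * Real.cos t)) = 0) : Qint V r = 0 := by
  have hint : ∀ a b : ℝ, IntervalIntegrable (fun t => V (r * Real.cos t)) MeasureTheory.volume a b :=
    fun a b => (hV.comp (continuous_const.mul Real.continuous_cos)).intervalIntegrable a b
  have i2 : (∫ t in π..(2*π), V (r * Real.cos t)) = ∫ t in (0:ℝ)..π, V (r * Real.cos t) := by
    have := intervalIntegral.integral_comp_sub_left (a := 0) (b := π)
      (fun t => V (r * Real.cos t)) (2*π)
    rw [show 2*π - π = π by ring, show 2*π - 0 = 2*π by ring] at this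
    rw [← this]
    congr 1
    funext x
    rw [show 2*π - x = -(x - 2*π) by ring, Real.cos_neg, Real.cos_sub_two_pi]
  have i4 : (∫ t in (π/2)..π, V (r * Real.cos t)) = ∫ t in (0:ℝ)..(π/2), V (r * Real.cos t) := by
    have := intervalIntegral.integral_comp_sub_left (a := 0) (b := π/2)
      (fun t => V (r * Real.cos t)) π
    rw [show π - π/2 = π/2 by ring, show π - 0 = π by ring] at this
    rw [← this]
    congr 1
    funext x
    rw [Real.cos_pi_sub, mul_neg, he]
  have i1 : (∫ t in (0:ℝ)..(2*π), V (r * Real.cos t))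
      = (∫ t in (0:ℝ)..π, V (r * Real.cos t)) + ∫ t in π..(2*π), V (r * Real.cos t) :=
    (intervalIntegral.integral_add_adjacent_intervals (hint 0 π) (hint π (2*π))).symm
  have i3 : (∫ t in (0:ℝ)..π, V (r * Real.cos t))
      = (∫ t in (0:ℝ)..(π/2), V (r * Real.cos t)) + ∫ t in (π/2)..π, V (r * Real.cos t) :=
    (intervalIntegral.integral_add_adjacent_intervals (hint 0 (π/2)) (hint (π/2) π)).symm
  have : (0:ℝ) = 4 * Qint V r := by
    rw [← hg, i1, i2, i3, i4, Qint]
    ring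
  linarith

/-- In one dimension, the averaging map `V ↦ V^ave` is injective on even continuous
functions. -/
theorem average_injective_on_even (V₁ V₂ : ℝ → ℝ)
    (h₁ : Continuous V₁) (h₂ : Continuous V₂)
    (he₁ : ∀ x, V₁ (-x) = V₁ x) (he₂ : ∀ x, V₂ (-x) = V₂ x)
    (h : ∀ z : ℂ, ave1 V₁ z = ave1 V₂ z) :
    V₁ = V₂ := by
  set V : ℝ → ℝ := fun y => V₁ y - V₂ y with hVdef
  have hV : Continuous V := h₁.sub h₂
  have heV : ∀ x, V (-x) = V x := fun x => by simp only [hVdef, he₁ x, he₂ x]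
  have hcirc : ∀ r : ℝ, (∫ t in (0:ℝ)..(2*Real.pi), V (r * Real.cos t)) = 0 := by
    intro r
    have hz := h (r : ℂ)
    unfold ave1 at hz
    have hre : ∀ t : ℝ, ((Complex.exp (Complex.I * t) * (r:ℂ)).re) = r * Real.cos t := by
      intro t
      rw [mul_comm Complex.I]
      simp [Complex.exp_mul_I, Complex.mul_re, Complex.cos_ofReal_re]
      ring
    simp only [hre] at hz
    have hne : (1 / (2 * Real.pi)) ≠ 0 := by positivity
    have heq : (∫ t in (0:ℝ)..(2*Real.pi), V₁ (r * Real.cos t))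
        = ∫ t in (0:ℝ)..(2*Real.pi), V₂ (r * Real.cos t) := mul_left_cancel₀ hne hz
    have : (∫ t in (0:ℝ)..(2*Real.pi), V (r * Real.cos t))
        = (∫ t in (0:ℝ)..(2*Real.pi), V₁ (r * Real.cos t))
          - ∫ t in (0:ℝ)..(2*Real.pi), V₂ (r * Real.cos t) :=
      intervalIntegral.integral_sub
        ((h₁.comp (continuous_const.mul Real.continuous_cos)).intervalIntegrable _ _)
        ((h₂.comp (continuous_const.mul Real.continuous_cos)).intervalIntegrable _ _)
    rw [this, heq, sub_self]
  have hq : ∀ r : ℝ, Qint V r = 0 := fun r => quarter_of_full hV heV r (hcirc r)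
  have hprim : ∀ s : ℝ, (∫ u in (0:ℝ)..s, V u) = 0 := by
    intro s
    have hk := key_identity hV s
    have : (∫ φ in (0:ℝ)..(Real.pi/2), Real.cos φ * Qint V (s * Real.cos φ)) = 0 := by
      have : (fun φ => Real.cos φ * Qint V (s * Real.cos φ)) = fun _ => (0:ℝ) := by
        funext φ; rw [hq]; ring
      rw [this]
      simp
    rw [this, mul_zero] at hk
    have hπ : (Real.pi/2) ≠ 0 := by positivity
    rcases mul_eq_zero.mp hk.symm with h' | h'
    · exact absurd h' hπ
    · exact h'
  have hVzero : ∀ x : ℝ, V x = 0 := by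
    intro x
    have hd := Continuous.deriv_integral V hV 0 x
    have : (fun u => ∫ t in (0:ℝ)..u, V t) = fun _ => (0:ℝ) := funext hprim
    rw [this] at hd
    simp at hd
    exact hd.symm
  funext x
  have := hVzero x
  simp only [hVdef] at this
  linarith
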